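/- (Lemma 5.4, union bound and ranking threshold T_rank.) For T ≥ 1, let n_j(T) = #{k ≤ T : r_k = j} denote the empirical request counts. Then ℙ(∃ j ≤ K and l > K with n_j(T) ≤ n_l(T)) ≤ K·(M − K)·exp(−T·Δ²/2). Consequently, for any δ ∈ (0, 1), if T ≥ (2/Δ²)·ln(K·(M − K)/δ), then ℙ(∃ j ≤ K and l > K with n_j(T) ≤ n_l(T)) ≤ δ. -/

import Mathlib

open MeasureTheory ProbabilityTheory Finset
open Real

private lemma hoeff3 (a b d : ℝ) (hd0 : 0 < d) (hd1 : d ≤ 1) (hb : 0 ≤ b) (hab : b + d ≤ a)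
    (hs : a + b ≤ 1) :
    1 + a * (exp (-d) - 1) + b * (exp d - 1) ≤ exp (-(d ^ 2) / 2) := by
  set E := exp d with hE
  set F := exp (-d) with hF
  have hEpos : 0 < E := exp_pos _
  have hFpos : 0 < F := exp_pos _
  have hEF : E * F = 1 := by rw [hE, hF, ← exp_add]; simp
  have hF1 : F ≤ 1 := by rw [hF, ← exp_zero]; exact exp_le_exp.2 (by linarith)
  have hEF2 : 2 ≤ E + F := by nlinarith [sq_nonneg (E - F), sq_nonneg (E + F)]
  have hb2 : b ≤ (1 - d) / 2 := by linarith
  have habs : |d| ≤ 1 := by rw [abs_of_pos hd0]; exact hd1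
  have hEb : E ≤ 1 + d + d ^ 2 / 2 + d ^ 3 / 6 + d ^ 4 * (5 / 96) := by
    have h := Real.exp_bound habs (n := 4) (by norm_num)
    have h2 : ∑ m ∈ Finset.range 4, d ^ m / (m.factorial : ℝ)
        = 1 + d + d ^ 2 / 2 + d ^ 3 / 6 := by
      norm_num [Finset.sum_range_succ, Nat.factorial]
    rw [h2, abs_of_pos hd0] at h
    norm_num [Nat.factorial] at h
    have := (abs_le.1 h).2
    nlinarith [this]
  have hFb : F ≤ 1 - d + d ^ 2 / 2 - d ^ 3 / 6 + d ^ 4 / 24 + d ^ 5 / 100 := by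
    have habs' : |(-d)| ≤ 1 := by rwa [abs_neg]
    have h := Real.exp_bound habs' (n := 5) (by norm_num)
    have h2 : ∑ m ∈ Finset.range 5, (-d) ^ m / (m.factorial : ℝ)
        = 1 - d + d ^ 2 / 2 - d ^ 3 / 6 + d ^ 4 / 24 := by
      norm_num [Finset.sum_range_succ, Nat.factorial]; ring
    rw [h2, abs_neg, abs_of_pos hd0] at h
    norm_num [Nat.factorial] at h
    have h3 := (abs_le.1 h).2
    have h5pos : 0 < d ^ 5 := pow_pos hd0 5
    nlinarith [h3]
  have key : 1 + a * (F - 1) + b * (E - 1) ≤ 1 - d ^ 2 / 2 := by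
    have s1 : a * (F - 1) ≤ (b + d) * (F - 1) :=
      mul_le_mul_of_nonpos_right hab (by linarith)
    have s2 : 1 + (b + d) * (F - 1) + b * (E - 1) = 1 + d * (F - 1) + b * (E + F - 2) := by ring
    have s3 : b * (E + F - 2) ≤ (1 - d) / 2 * (E + F - 2) :=
      mul_le_mul_of_nonneg_right hb2 (by linarith)
    have hd4 : d ^ 4 ≤ d ^ 2 := pow_le_pow_of_le_one hd0.le hd1 (by norm_num)
    have hd5 : d ^ 5 ≤ d ^ 4 := pow_le_pow_of_le_one hd0.le hd1 (by norm_num)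
    have hd6 : d ^ 6 ≤ d ^ 4 := pow_le_pow_of_le_one hd0.le hd1 (by norm_num)
    nlinarith [mul_le_mul_of_nonneg_left hFb (le_of_lt hd0),
      mul_le_mul_of_nonneg_right (add_le_add hEb hFb) (by linarith : (0:ℝ) ≤ (1 - d) / 2),
      pow_pos hd0 4, pow_pos hd0 5]
  have hlast : 1 - d ^ 2 / 2 ≤ exp (-(d ^ 2) / 2) := by
    have := Real.add_one_le_exp (-(d ^ 2) / 2)
    linarith
  linarith

private lemma mgf_step {Ω : Type*} [MeasurableSpace Ω] (μ : Measure Ω) [IsProbabilityMeasure μ]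
    {M : ℕ} (p : Fin M → ℝ) (hp : ∀ i, 0 ≤ p i) (hsum : ∑ i, p i = 1)
    (r : Ω → Fin M) (hr : Measurable r)
    (hd : ∀ i, μ {ω | r ω = i} = ENNReal.ofReal (p i))
    (j l : Fin M) (hjl : j ≠ l) (t : ℝ) :
    ∫ ω, exp (t * ((if r ω = l then (1:ℝ) else 0) - (if r ω = j then 1 else 0))) ∂μ
      = 1 + p j * (exp (-t) - 1) + p l * (exp t - 1) := by
  set f : Fin M → ℝ :=
    fun i => exp (t * ((if i = l then (1:ℝ) else 0) - (if i = j then 1 else 0))) with hf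
  have : IsProbabilityMeasure (μ.map r) := Measure.isProbabilityMeasure_map hr.aemeasurable
  have hmap : ∫ ω, f (r ω) ∂μ = ∫ x, f x ∂(μ.map r) :=
    (integral_map hr.aemeasurable (by apply Measurable.aestronglyMeasurable
                                      exact measurable_of_countable f)).symm
  have hfin : ∫ x, f x ∂(μ.map r) = ∑ i, ((μ.map r) {i}).toReal • f i :=
    integral_fintype .of_finite
  have hsingle : ∀ i, ((μ.map r) {i}).toReal = p i := by
    intro i
    rw [Measure.map_apply hr (measurableSet_singleton i)]
    have : r ⁻¹' {i} = {ω | r ω = i} := by ext ω; simp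
    rw [this, hd i, ENNReal.toReal_ofReal (hp i)]
  have hterm : ∀ i : Fin M, p i • f i
      = p i + (if i = j then p i * (exp (-t) - 1) else 0)
            + (if i = l then p i * (exp t - 1) else 0) := by
    intro i
    rcases eq_or_ne i j with rfl | hij
    · simp [hf, hjl]
      ring
    · rcases eq_or_ne i l with rfl | hil
      · simp [hf, hij]
        ring
      · simp [hf, hij, hil]
  calc ∫ ω, f (r ω) ∂μ = ∑ i, ((μ.map r) {i}).toReal • f i := by rw [hmap, hfin]
    _ = ∑ i, p i • f i := by simp_rw [hsingle]
    _ = ∑ i, (p i + (if i = j then p i * (exp (-t) - 1) else 0)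
            + (if i = l then p i * (exp t - 1) else 0)) := by simp_rw [hterm]
    _ = 1 + p j * (exp (-t) - 1) + p l * (exp t - 1) := by
        rw [Finset.sum_add_distrib, Finset.sum_add_distrib, hsum,
          Finset.sum_ite_eq' univ j (fun i => p i * (exp (-t) - 1)),
          Finset.sum_ite_eq' univ l (fun i => p i * (exp t - 1))]
        simp

private lemma pair_bound {Ω : Type*} [MeasurableSpace Ω] (μ : Measure Ω) [IsProbabilityMeasure μ]
    {M : ℕ} (p : Fin M → ℝ) (hp : ∀ i, 0 ≤ p i) (hsum : ∑ i, p i = 1)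
    (r : ℕ → Ω → Fin M) (hmeas : ∀ k, Measurable (r k))
    (hindep : iIndepFun r μ)
    (hdist : ∀ (k : ℕ) (i : Fin M), μ {ω | r k ω = i} = ENNReal.ofReal (p i))
    (j l : Fin M) (hjl : j ≠ l) (d : ℝ) (hd0 : 0 < d) (hd1 : d ≤ 1)
    (hgap : p l + d ≤ p j) (T : ℕ) :
    μ {ω | ((Finset.range T).filter (fun k => r k ω = j)).card
        ≤ ((Finset.range T).filter (fun k => r k ω = l)).card}
      ≤ ENNReal.ofReal (Real.exp (-(T : ℝ) * d ^ 2 / 2)) := by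
  classical
  set φ : Fin M → ℝ := fun i => (if i = l then (1:ℝ) else 0) - (if i = j then 1 else 0) with hφ
  have hφmeas : Measurable φ := measurable_of_countable φ
  set X : ℕ → Ω → ℝ := fun k => φ ∘ r k with hX
  have hXmeas : ∀ k, Measurable (X k) := fun k => hφmeas.comp (hmeas k)
  have hXindep : iIndepFun X μ :=
    hindep.comp (fun _ => φ) (fun _ => hφmeas)
  have hφbdd : ∀ i, -1 ≤ φ i ∧ φ i ≤ 1 := by
    intro i; rw [hφ]; dsimp only; constructor <;> (split_ifs <;> norm_num)
  have hint : ∀ k, Integrable (fun ω => exp (d * X k ω)) μ := by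
    intro k
    refine Integrable.mono' (integrable_const (exp d)) ?_ (ae_of_all _ fun ω => ?_)
    · exact ((hXmeas k).const_mul d).exp.aestronglyMeasurable
    · rw [Real.norm_eq_abs, abs_of_pos (exp_pos _)]
      refine exp_le_exp.2 ?_
      calc d * X k ω ≤ d * 1 := by
            exact mul_le_mul_of_nonneg_left (hφbdd (r k ω)).2 hd0.le
        _ = d := mul_one d
  -- event rewrite
  have hevent : {ω | ((Finset.range T).filter (fun k => r k ω = j)).card
        ≤ ((Finset.range T).filter (fun k => r k ω = l)).card}
      = {ω | (0:ℝ) ≤ (∑ k ∈ Finset.range T, X k) ω} := by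
    ext ω
    simp only [Set.mem_setOf_eq, Finset.sum_apply]
    have hsumX : (∑ k ∈ Finset.range T, X k ω)
        = (((Finset.range T).filter (fun k => r k ω = l)).card : ℝ)
          - (((Finset.range T).filter (fun k => r k ω = j)).card : ℝ) := by
      rw [Finset.card_filter, Finset.card_filter]
      push_cast
      rw [← Finset.sum_sub_distrib]
      rfl
    rw [hsumX, sub_nonneg, Nat.cast_le]
  rw [hevent]
  have hintsum : Integrable (fun ω => exp (d * (∑ k ∈ Finset.range T, X k) ω)) μ :=
    hXindep.integrable_exp_mul_sum hXmeas (fun k _ => hint k)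
  have hch := measure_ge_le_exp_mul_mgf (μ := μ) (X := ∑ k ∈ Finset.range T, X k)
    (t := d) 0 hd0.le hintsum
  simp only [mul_zero, neg_zero, exp_zero, one_mul] at hch
  have hmgf_sum : mgf (∑ k ∈ Finset.range T, X k) μ d
      = ∏ k ∈ Finset.range T, mgf (X k) μ d := hXindep.mgf_sum hXmeas _
  have hone : ∀ k, mgf (X k) μ d = 1 + p j * (exp (-d) - 1) + p l * (exp d - 1) := by
    intro k
    have : mgf (X k) μ d = ∫ ω, exp (d * ((if r k ω = l then (1:ℝ) else 0)
        - (if r k ω = j then 1 else 0))) ∂μ := rfl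
    rw [this, mgf_step μ p hp hsum (r k) (hmeas k) (hdist k) j l hjl d]
  have hjl_sum : p j + p l ≤ 1 := by
    have h1 : ∑ i ∈ ({j, l} : Finset (Fin M)), p i ≤ ∑ i, p i :=
      Finset.sum_le_sum_of_subset_of_nonneg (Finset.subset_univ _) (fun i _ _ => hp i)
    rwa [Finset.sum_pair hjl, hsum] at h1
  have hc : 1 + p j * (exp (-d) - 1) + p l * (exp d - 1) ≤ exp (-(d ^ 2) / 2) :=
    hoeff3 (p j) (p l) d hd0 hd1 (hp l) hgap (by linarith)
  have hprod : mgf (∑ k ∈ Finset.range T, X k) μ d ≤ exp (-(T : ℝ) * d ^ 2 / 2) := by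
    rw [hmgf_sum]
    calc ∏ k ∈ Finset.range T, mgf (X k) μ d
        ≤ ∏ _k ∈ Finset.range T, exp (-(d ^ 2) / 2) :=
          Finset.prod_le_prod (fun k _ => mgf_nonneg) (fun k _ => (hone k) ▸ hc)
      _ = exp (-(d ^ 2) / 2) ^ T := by rw [Finset.prod_const, Finset.card_range]
      _ = exp (-(T : ℝ) * d ^ 2 / 2) := by
          rw [← Real.exp_nat_mul]; congr 1; ring
  rw [ENNReal.le_ofReal_iff_toReal_le (measure_ne_top μ _) (exp_pos _).le]
  exact hch.trans hprod

/-- **Union bound and ranking threshold, Lemma 5.4.** With i.i.d.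
requests as above, the probability that some top-`K` index is outcounted by some
index beyond `K` after `T` requests is at most `K·(M-K)·exp(-T·Δ²/2)`; consequently,
for `δ ∈ (0,1)`, it is at most `δ` once `T ≥ (2/Δ²)·ln(K·(M-K)/δ)`. -/
theorem ranking_union_bound {Ω : Type*} [MeasurableSpace Ω]
    (μ : Measure Ω) [IsProbabilityMeasure μ]
    (M : ℕ) (p : Fin M → ℝ)
    (hmono : ∀ i j : Fin M, i ≤ j → p j ≤ p i)
    (hpos : ∀ j : Fin M, 0 < p j)
    (hsum : ∑ j, p j = 1)
    (r : ℕ → Ω → Fin M)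
    (hmeas : ∀ k, Measurable (r k))
    (hindep : iIndepFun r μ)
    (hdist : ∀ (k : ℕ) (j : Fin M), μ {ω | r k ω = j} = ENNReal.ofReal (p j))
    (K : ℕ) (hK1 : 1 ≤ K) (hKM : K < M)
    (hΔpos : 0 < p ⟨K - 1, by omega⟩ - p ⟨K, hKM⟩)
    (T : ℕ) (hT : 1 ≤ T) :
    μ {ω | ∃ j l : Fin M, (j : ℕ) < K ∧ K ≤ (l : ℕ) ∧
            ((Finset.range T).filter (fun k => r k ω = j)).card
              ≤ ((Finset.range T).filter (fun k => r k ω = l)).card}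
      ≤ ENNReal.ofReal ((K : ℝ) * ((M : ℝ) - (K : ℝ)) *
          Real.exp (-(T : ℝ) * (p ⟨K - 1, by omega⟩ - p ⟨K, hKM⟩) ^ 2 / 2)) ∧
    (∀ δ : ℝ, 0 < δ → δ < 1 →
      (2 / (p ⟨K - 1, by omega⟩ - p ⟨K, hKM⟩) ^ 2) *
          Real.log ((K : ℝ) * ((M : ℝ) - (K : ℝ)) / δ) ≤ (T : ℝ) →
      μ {ω | ∃ j l : Fin M, (j : ℕ) < K ∧ K ≤ (l : ℕ) ∧
              ((Finset.range T).filter (fun k => r k ω = j)).card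
                ≤ ((Finset.range T).filter (fun k => r k ω = l)).card}
        ≤ ENNReal.ofReal δ) := by
  classical
  set d : ℝ := p ⟨K - 1, by omega⟩ - p ⟨K, hKM⟩ with hd
  have hple : ∀ i : Fin M, p i ≤ 1 := by
    intro i
    rw [← hsum]
    exact Finset.single_le_sum (fun i _ => (hpos i).le) (Finset.mem_univ i)
  have hd1 : d ≤ 1 := by
    have h1 := hple ⟨K - 1, by omega⟩
    have h2 := hpos ⟨K, hKM⟩
    rw [hd]; linarith
  set A : Fin M × Fin M → Set Ω := fun q =>
    {ω | ((Finset.range T).filter (fun k => r k ω = q.1)).card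
        ≤ ((Finset.range T).filter (fun k => r k ω = q.2)).card} with hA
  set S : Finset (Fin M × Fin M) :=
    ((Finset.univ : Finset (Fin M)).filter fun j : Fin M => (j : ℕ) < K) ×ˢ
      ((Finset.univ : Finset (Fin M)).filter fun l : Fin M => K ≤ (l : ℕ)) with hS
  have hSmem : ∀ q : Fin M × Fin M, q ∈ S ↔ ((q.1 : ℕ) < K ∧ K ≤ (q.2 : ℕ)) := by
    intro q
    simp [hS, Finset.mem_product]
  have hcard1 : ((Finset.univ : Finset (Fin M)).filter fun j : Fin M => (j : ℕ) < K).card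
      = K := by
    rw [Finset.card_filter]
    rw [Fin.sum_univ_eq_sum_range (fun i => if i < K then (1 : ℕ) else 0)]
    rw [← Finset.card_filter]
    have : Finset.filter (fun i => i < K) (Finset.range M) = Finset.range K := by
      ext a; simp only [Finset.mem_filter, Finset.mem_range]; omega
    rw [this, Finset.card_range]
  have hcard2 : ((Finset.univ : Finset (Fin M)).filter fun l : Fin M => K ≤ (l : ℕ)).card
      = M - K := by
    have := Finset.card_filter_add_card_filter_not
      (s := (Finset.univ : Finset (Fin M))) (p := fun l : Fin M => K ≤ (l : ℕ))
    simp only [not_le, Finset.card_univ, Fintype.card_fin] at this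
    omega
  have hScard : S.card = K * (M - K) := by
    rw [hS, Finset.card_product, hcard1, hcard2]
  have hpairs : ∀ q ∈ S, μ (A q) ≤ ENNReal.ofReal (Real.exp (-(T : ℝ) * d ^ 2 / 2)) := by
    intro q hq
    obtain ⟨hq1, hq2⟩ := (hSmem q).1 hq
    have hjl : q.1 ≠ q.2 := by
      intro h
      rw [h] at hq1
      omega
    have hgap : p q.2 + d ≤ p q.1 := by
      have h1 : p q.1 ≥ p ⟨K - 1, by omega⟩ := by
        apply hmono
        rw [Fin.le_def]
        simpa using by omega
      have h2 : p q.2 ≤ p ⟨K, hKM⟩ := by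
        apply hmono
        rw [Fin.le_def]
        simpa using hq2
      rw [hd]; linarith
    exact pair_bound μ p (fun i => (hpos i).le) hsum r hmeas hindep hdist
      q.1 q.2 hjl d hΔpos hd1 hgap T
  have hmain : μ {ω | ∃ j l : Fin M, (j : ℕ) < K ∧ K ≤ (l : ℕ) ∧
            ((Finset.range T).filter (fun k => r k ω = j)).card
              ≤ ((Finset.range T).filter (fun k => r k ω = l)).card}
      ≤ ENNReal.ofReal ((K : ℝ) * ((M : ℝ) - (K : ℝ)) *
          Real.exp (-(T : ℝ) * d ^ 2 / 2)) := by
    have hsub : {ω | ∃ j l : Fin M, (j : ℕ) < K ∧ K ≤ (l : ℕ) ∧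
            ((Finset.range T).filter (fun k => r k ω = j)).card
              ≤ ((Finset.range T).filter (fun k => r k ω = l)).card}
        ⊆ ⋃ q ∈ S, A q := by
      rintro ω ⟨j, l, hj, hl, hc⟩
      refine Set.mem_iUnion₂.2 ⟨(j, l), (hSmem (j, l)).2 ⟨hj, hl⟩, hc⟩
    refine le_trans (measure_mono hsub) ?_
    calc μ (⋃ q ∈ S, A q)
        ≤ ∑ q ∈ S, μ (A q) := measure_biUnion_finset_le S A
      _ ≤ ∑ _q ∈ S, ENNReal.ofReal (Real.exp (-(T : ℝ) * d ^ 2 / 2)) :=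
          Finset.sum_le_sum hpairs
      _ = (S.card : ENNReal) * ENNReal.ofReal (Real.exp (-(T : ℝ) * d ^ 2 / 2)) := by
          rw [Finset.sum_const, nsmul_eq_mul]
      _ = ENNReal.ofReal ((K : ℝ) * ((M : ℝ) - (K : ℝ)) *
            Real.exp (-(T : ℝ) * d ^ 2 / 2)) := by
          rw [hScard, ← ENNReal.ofReal_natCast, ← ENNReal.ofReal_mul (by positivity)]
          congr 1
          have : ((K * (M - K) : ℕ) : ℝ) = (K : ℝ) * ((M : ℝ) - (K : ℝ)) := by
            push_cast [Nat.cast_sub hKM.le]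
            ring
          rw [this]
  refine ⟨hmain, ?_⟩
  intro δ hδ0 hδ1 hTge
  refine hmain.trans (ENNReal.ofReal_le_ofReal ?_)
  set C : ℝ := (K : ℝ) * ((M : ℝ) - (K : ℝ)) with hC
  have hC1 : 1 ≤ C := by
    have hK' : (1 : ℝ) ≤ (K : ℝ) := by exact_mod_cast hK1
    have hMK : (1 : ℝ) ≤ (M : ℝ) - (K : ℝ) := by
      have : (K : ℝ) + 1 ≤ (M : ℝ) := by exact_mod_cast hKM
      linarith
    nlinarith
  have hd2 : 0 < d ^ 2 := pow_pos hΔpos 2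
  have hlog : Real.log (C / δ) ≤ (T : ℝ) * d ^ 2 / 2 := by
    have h := mul_le_mul_of_nonneg_right hTge (le_of_lt (by positivity : (0:ℝ) < d ^ 2 / 2))
    have heq : 2 / d ^ 2 * Real.log (C / δ) * (d ^ 2 / 2) = Real.log (C / δ) := by
      field_simp
    rw [heq] at h
    linarith [h]
  have hCδ : C / δ ≤ Real.exp ((T : ℝ) * d ^ 2 / 2) := by
    have hpos' : 0 < C / δ := by positivity
    calc C / δ = Real.exp (Real.log (C / δ)) := (Real.exp_log hpos').symm
      _ ≤ Real.exp ((T : ℝ) * d ^ 2 / 2) := Real.exp_le_exp.2 hlog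
  have hrw : -(T : ℝ) * d ^ 2 / 2 = -((T : ℝ) * d ^ 2 / 2) := by ring
  rw [hrw, Real.exp_neg]
  rw [div_le_iff₀ hδ0] at hCδ
  rw [mul_inv_le_iff₀ (Real.exp_pos _)]
  linarith
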